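/- Let 𝕋 = {z ∈ ℂ : |z| = 1} be the unit circle and let {T_n} be a sequence of positive linear maps from C(𝕋) into C(𝕋) such that T_n 1 → 1 and T_n z → z uniformly on 𝕋 (where z denotes the identity function w ↦ w). Then ‖T_n f − f‖ → 0 as n → ∞ for every f ∈ C(𝕋). -/

import Mathlib

open Filter Topology

/-- The identity function `z : w ↦ w` as an element of `C(𝕋, ℂ)`, where `𝕋` is the unit
circle. -/
def circleIdFun : C(↥(Metric.sphere (0 : ℂ) 1), ℂ) :=
  ⟨fun z => (z : ℂ), continuous_subtype_val⟩

namespace KorovkinAux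

abbrev X := ↥(Metric.sphere (0 : ℂ) 1)
abbrev CX := C(X, ℂ)

lemma norm_X (z : X) : ‖(z : ℂ)‖ = 1 := mem_sphere_zero_iff_norm.mp z.2

lemma norm_sub_sq (x z : X) :
    ‖(z : ℂ) - (x : ℂ)‖ ^ 2 = 2 - 2 * (((starRingEnd ℂ) (x : ℂ)) * (z : ℂ)).re := by
  have hz : ‖(z : ℂ)‖ = 1 := norm_X z
  have hx : ‖(x : ℂ)‖ = 1 := norm_X x
  have h1 : ‖(z : ℂ) - (x : ℂ)‖ ^ 2 = Complex.normSq ((z : ℂ) - (x : ℂ)) := by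
    rw [Complex.normSq_eq_norm_sq]
  rw [h1, Complex.normSq_sub]
  have hz2 : Complex.normSq (z : ℂ) = 1 := by
    rw [Complex.normSq_eq_norm_sq, hz]; norm_num
  have hx2 : Complex.normSq (x : ℂ) = 1 := by
    rw [Complex.normSq_eq_norm_sq, hx]; norm_num
  rw [hz2, hx2, mul_comm ((z:ℂ)) _]
  ring

lemma key_est (S : CX →ₗ[ℂ] CX)
    (pos : ∀ f : CX, (∀ z, (f z).im = 0 ∧ 0 ≤ (f z).re) →
      ∀ z, ((S f) z).im = 0 ∧ 0 ≤ ((S f) z).re)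
    (hstar : ∀ f : CX, S (star f) = star (S f))
    (f : CX) (hre : ∀ z, (f z).im = 0)
    (ε M : ℝ) (hε : 0 ≤ ε) (hM : 0 ≤ M)
    (hfM : ∀ x z : X, |(f z).re - (f x).re| ≤ ε + M * ‖(z : ℂ) - (x : ℂ)‖ ^ 2) :
    ‖S f - f‖ ≤ ε + (ε + 2 * M + ‖f‖) * ‖S 1 - 1‖
      + 2 * M * ‖S circleIdFun - circleIdFun‖ := by
  have hS1 : (0:ℝ) ≤ ‖S 1 - 1‖ := norm_nonneg _
  have hSz : (0:ℝ) ≤ ‖S circleIdFun - circleIdFun‖ := norm_nonneg _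
  have hf0 : (0:ℝ) ≤ ‖f‖ := norm_nonneg _
  rw [ContinuousMap.norm_le _ (by positivity)]
  intro x
  -- the test functions
  set Z : CX := circleIdFun with hZ_def
  have hZval : ∀ z : X, Z z = (z : ℂ) := fun z => rfl
  set g : CX := f - (f x) • 1 with hg_def
  set h : CX := ((ε + 2 * M : ℝ) : ℂ) • (1 : CX)
      - ((M : ℂ) * (starRingEnd ℂ) (x : ℂ)) • Z
      - ((M : ℂ) * (x : ℂ)) • star Z with hh_def
  -- pointwise description of h
  have hhval : ∀ z : X, h z = ((ε + M * ‖(z : ℂ) - (x : ℂ)‖ ^ 2 : ℝ) : ℂ) := by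
    intro z
    have e1 : h z = ((ε + 2 * M : ℝ) : ℂ)
        - (M : ℂ) * (starRingEnd ℂ) (x : ℂ) * (z : ℂ)
        - (M : ℂ) * (x : ℂ) * (starRingEnd ℂ) (z : ℂ) := by
      simp only [hh_def, ContinuousMap.sub_apply, ContinuousMap.smul_apply,
        ContinuousMap.one_apply, ContinuousMap.star_apply, RCLike.star_def,
        smul_eq_mul, hZval]
      ring
    have e2 : (M : ℂ) * (x : ℂ) * (starRingEnd ℂ) (z : ℂ)
        = (starRingEnd ℂ) ((M : ℂ) * (starRingEnd ℂ) (x : ℂ) * (z : ℂ)) := by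
      rw [map_mul, map_mul, Complex.conj_ofReal, Complex.conj_conj]
    set w : ℂ := (M : ℂ) * (starRingEnd ℂ) (x : ℂ) * (z : ℂ) with hw_def
    have e3 : w + (starRingEnd ℂ) w = ((2 * w.re : ℝ) : ℂ) := by
      rw [Complex.add_conj]; try (push_cast; ring)
    have e4 : w.re = M * (((starRingEnd ℂ) (x : ℂ)) * (z : ℂ)).re := by
      rw [hw_def, mul_assoc]
      simp [Complex.mul_re]
    rw [e1, e2]
    rw [show ((ε + 2 * M : ℝ) : ℂ) - w - (starRingEnd ℂ) w
        = ((ε + 2 * M : ℝ) : ℂ) - (w + (starRingEnd ℂ) w) by ring, e3, e4,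
      norm_sub_sq x z]
    push_cast
    ring
  -- g is real and dominated by h
  have hgval : ∀ z : X, g z = f z - f x := by
    intro z; simp [hg_def, ContinuousMap.sub_apply, ContinuousMap.smul_apply]
  have hgim : ∀ z : X, (g z).im = 0 := by
    intro z; rw [hgval z]; simp [Complex.sub_im, hre z, hre x]
  have hdom : ∀ z : X, |(g z).re| ≤ (h z).re := by
    intro z
    rw [hhval z, hgval z]
    simp only [Complex.ofReal_re, Complex.sub_re]
    exact hfM x z
  have hhim : ∀ z : X, (h z).im = 0 := fun z => by
    rw [hhval z]; exact Complex.ofReal_im _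
  -- positivity applied to h ± g
  have P := pos (h + g) (by
    intro z
    constructor
    · simp [ContinuousMap.add_apply, Complex.add_im, hhim z, hgim z]
    · simp only [ContinuousMap.add_apply, Complex.add_re]
      have := (abs_le.1 (hdom z)).1
      linarith)
  have Q := pos (h - g) (by
    intro z
    constructor
    · simp [ContinuousMap.sub_apply, Complex.sub_im, hhim z, hgim z]
    · simp only [ContinuousMap.sub_apply, Complex.sub_re]
      have := (abs_le.1 (hdom z)).2
      linarith)
  set A : ℂ := (S g) x with hA_def
  set B : ℂ := (S h) x with hB_def
  have hPx : ((S (h + g)) x) = B + A := by rw [map_add]; rfl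
  have hQx : ((S (h - g)) x) = B - A := by rw [map_sub]; rfl
  have hAim : A.im = 0 := by
    have p1 := (P x).1; have q1 := (Q x).1
    rw [hPx] at p1; rw [hQx] at q1
    simp only [Complex.add_im, Complex.sub_im] at p1 q1
    linarith
  have hAre : |A.re| ≤ B.re := by
    have p2 := (P x).2; have q2 := (Q x).2
    rw [hPx] at p2; rw [hQx] at q2
    simp only [Complex.add_re, Complex.sub_re] at p2 q2
    rw [abs_le]; constructor <;> linarith
  have hAnorm : ‖A‖ ≤ B.re := by
    have hAeq : A = ((A.re : ℝ) : ℂ) := by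
      apply Complex.ext <;> simp [hAim]
    calc ‖A‖ = |A.re| := by rw [hAeq]; simp
    _ ≤ B.re := hAre
  -- bound B.re
  set d : ℂ := (S 1 - 1) x with hd_def
  set e : ℂ := (S Z - Z) x with he_def
  have hd1 : (S 1) x = 1 + d := by
    rw [hd_def]; simp only [ContinuousMap.sub_apply, ContinuousMap.one_apply]; ring
  have he1 : (S Z) x = (x : ℂ) + e := by
    rw [he_def]; simp only [ContinuousMap.sub_apply]; rw [hZval]; ring
  have hdn : ‖d‖ ≤ ‖S 1 - 1‖ := (S 1 - 1).norm_coe_le_norm x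
  have hen : ‖e‖ ≤ ‖S Z - Z‖ := (S Z - Z).norm_coe_le_norm x
  have hxx : (starRingEnd ℂ) (x : ℂ) * (x : ℂ) = 1 := by
    rw [mul_comm, Complex.mul_conj]
    rw [Complex.normSq_eq_norm_sq, norm_X x]
    norm_num
  have hxx2 : (x : ℂ) * (starRingEnd ℂ) (x : ℂ) = 1 := by rw [mul_comm]; exact hxx
  have hBval : B = ((ε + 2 * M : ℝ) : ℂ) * (1 + d)
      - (M : ℂ) * (starRingEnd ℂ) (x : ℂ) * ((x : ℂ) + e)
      - (M : ℂ) * (x : ℂ) * (starRingEnd ℂ) ((x : ℂ) + e) := by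
    rw [hB_def, hh_def]
    simp only [map_sub, map_smul, ContinuousMap.sub_apply, ContinuousMap.smul_apply,
      smul_eq_mul, hstar Z, ContinuousMap.star_apply, RCLike.star_def]
    try rw [hd1]
    try rw [he1]
  have expand : B = ((ε : ℝ) : ℂ) + ((ε + 2 * M : ℝ) : ℂ) * d
      - (M : ℂ) * ((starRingEnd ℂ) (x : ℂ) * e)
      - (M : ℂ) * (starRingEnd ℂ) ((starRingEnd ℂ) (x : ℂ) * e) := by
    rw [hBval, map_add, map_mul, Complex.conj_conj]
    push_cast
    linear_combination (-2 * (M : ℂ)) * hxx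
  have hBre : B.re = ε + (ε + 2 * M) * d.re
      - 2 * M * ((starRingEnd ℂ) (x : ℂ) * e).re := by
    rw [expand]
    simp only [Complex.add_re, Complex.sub_re, Complex.ofReal_re, Complex.mul_re,
      Complex.ofReal_im, Complex.conj_re, Complex.conj_im]
    ring
  have hd2 : |d.re| ≤ ‖S 1 - 1‖ :=
    le_trans (Complex.abs_re_le_norm d) (by exact hdn)
  have hq2 : |((starRingEnd ℂ) (x : ℂ) * e).re| ≤ ‖S Z - Z‖ := by
    refine le_trans (Complex.abs_re_le_norm _) ?_
    rw [norm_mul, RCLike.norm_conj, norm_X x, one_mul]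
    exact hen
  have hBre2 : B.re ≤ ε + (ε + 2 * M) * ‖S 1 - 1‖ + 2 * M * ‖S Z - Z‖ := by
    rw [hBre]
    have h1' := (abs_le.1 hd2).2
    have h2' := (abs_le.1 hq2).1
    nlinarith
  -- assemble
  have hsplit : (S f) x = A + f x * ((S 1) x) := by
    have hf' : f = g + (f x) • 1 := by rw [hg_def]; abel
    conv_lhs => rw [hf']
    rw [map_add, map_smul]
    simp [ContinuousMap.add_apply, ContinuousMap.smul_apply, hA_def]
  have hfinal : (S f - f) x = A + f x * d := by
    rw [ContinuousMap.sub_apply, hsplit, hd1]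
    ring
  rw [hfinal]
  have hna : ‖A + f x * d‖ ≤ ‖A‖ + ‖f x‖ * ‖d‖ := by
    refine le_trans (norm_add_le _ _) ?_
    rw [norm_mul]
  have hfx : ‖f x‖ ≤ ‖f‖ := f.norm_coe_le_norm x
  have hmul : ‖f x‖ * ‖d‖ ≤ ‖f‖ * ‖S 1 - 1‖ :=
    mul_le_mul hfx hdn (norm_nonneg _) hf0
  have := le_trans hna (by linarith [hAnorm, hBre2] :
    ‖A‖ + ‖f x‖ * ‖d‖ ≤ ε + (ε + 2 * M) * ‖S 1 - 1‖ + 2 * M * ‖S Z - Z‖ + ‖f‖ * ‖S 1 - 1‖)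
  calc ‖A + f x * d‖ ≤ ε + (ε + 2 * M) * ‖S 1 - 1‖ + 2 * M * ‖S Z - Z‖ + ‖f‖ * ‖S 1 - 1‖ := this
  _ = ε + (ε + 2 * M + ‖f‖) * ‖S 1 - 1‖ + 2 * M * ‖S Z - Z‖ := by ring


lemma S_real (S : CX →ₗ[ℂ] CX)
    (pos : ∀ f : CX, (∀ z, (f z).im = 0 ∧ 0 ≤ (f z).re) →
      ∀ z, ((S f) z).im = 0 ∧ 0 ≤ ((S f) z).re)
    (f : CX) (hf : ∀ z, (f z).im = 0) : ∀ z, ((S f) z).im = 0 := by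
  have h1 := pos 1 (by intro z; simp)
  have h2 := pos (f + (‖f‖ : ℂ) • 1) (by
    intro z
    have hb : ‖f z‖ ≤ ‖f‖ := f.norm_coe_le_norm z
    have hre : |(f z).re| ≤ ‖f z‖ := Complex.abs_re_le_norm (f z)
    constructor
    · simp [hf z]
    · simp only [ContinuousMap.add_apply, ContinuousMap.smul_apply,
        ContinuousMap.one_apply, smul_eq_mul, mul_one, Complex.add_re,
        Complex.ofReal_re]
      have := (abs_le.1 hre).1
      linarith)
  have key : S f = S (f + (‖f‖ : ℂ) • 1) - (‖f‖ : ℂ) • S 1 := by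
    rw [map_add, map_smul]; abel
  intro z
  rw [key]
  simp only [ContinuousMap.sub_apply, ContinuousMap.smul_apply, smul_eq_mul,
    Complex.sub_im, Complex.mul_im, Complex.ofReal_re, Complex.ofReal_im,
    (h2 z).1, (h1 z).1]
  ring

lemma S_star (S : CX →ₗ[ℂ] CX)
    (hreal : ∀ f : CX, (∀ z, (f z).im = 0) → ∀ z, ((S f) z).im = 0)
    (f : CX) : S (star f) = star (S f) := by
  set u : CX := ⟨fun z => ((f z).re : ℂ),
    Complex.continuous_ofReal.comp (Complex.continuous_re.comp f.continuous)⟩ with hu_def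
  set v : CX := ⟨fun z => ((f z).im : ℂ),
    Complex.continuous_ofReal.comp (Complex.continuous_im.comp f.continuous)⟩ with hv_def
  have hu : ∀ z, (u z).im = 0 := fun z => by simp [hu_def]
  have hv : ∀ z, (v z).im = 0 := fun z => by simp [hv_def]
  have hf : f = u + Complex.I • v := by
    ext z
    simp only [ContinuousMap.add_apply, ContinuousMap.smul_apply, smul_eq_mul,
      hu_def, hv_def, ContinuousMap.coe_mk]
    rw [mul_comm]
    exact (Complex.re_add_im (f z)).symm
  have hfs : star f = u - Complex.I • v := by
    ext z
    simp only [ContinuousMap.sub_apply, ContinuousMap.smul_apply, smul_eq_mul,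
      hu_def, hv_def, ContinuousMap.coe_mk, ContinuousMap.star_apply,
      RCLike.star_def]
    apply Complex.ext <;> simp
  have hSu := hreal u hu
  have hSv := hreal v hv
  have e1 : S (star f) = S u - Complex.I • S v := by
    rw [hfs]; simp only [map_sub, map_smul]
  have e2 : S f = S u + Complex.I • S v := by
    rw [hf]; simp only [map_add, map_smul]
  rw [e1, e2]
  ext z
  simp only [ContinuousMap.sub_apply, ContinuousMap.smul_apply, smul_eq_mul,
    ContinuousMap.star_apply, ContinuousMap.add_apply, RCLike.star_def,
    map_add, map_mul, Complex.conj_I]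
  rw [Complex.conj_eq_iff_im.2 (hSu z), Complex.conj_eq_iff_im.2 (hSv z)]
  ring

lemma real_case
    (T : ℕ → (CX →ₗ[ℂ] CX))
    (hpos : ∀ n, ∀ f : CX, (∀ z, (f z).im = 0 ∧ 0 ≤ (f z).re) →
      ∀ z, ((T n f) z).im = 0 ∧ 0 ≤ ((T n f) z).re)
    (h1 : Tendsto (fun n => ‖T n 1 - 1‖) atTop (nhds 0))
    (hz : Tendsto (fun n => ‖T n circleIdFun - circleIdFun‖) atTop (nhds 0))
    (f : CX) (hre : ∀ z, (f z).im = 0) :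
    Tendsto (fun n => ‖T n f - f‖) atTop (nhds 0) := by
  have hstar : ∀ n, ∀ g : CX, T n (star g) = star (T n g) :=
    fun n => S_star (T n) (fun g hg => S_real (T n) (hpos n) g hg)
  rw [NormedAddCommGroup.tendsto_nhds_zero]
  intro ε hε
  obtain ⟨δ, hδ, hδ'⟩ := Metric.uniformContinuous_iff.mp
    (CompactSpace.uniformContinuous_of_continuous f.continuous) (ε / 4) (by positivity)
  set M : ℝ := 2 * ‖f‖ / δ ^ 2 with hM_def
  have hf0 : (0:ℝ) ≤ ‖f‖ := norm_nonneg _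
  have hM : 0 ≤ M := by positivity
  have hfM : ∀ x z : X, |(f z).re - (f x).re| ≤ ε / 4 + M * ‖(z : ℂ) - (x : ℂ)‖ ^ 2 := by
    intro x z
    have hdxz : dist z x = ‖(z : ℂ) - (x : ℂ)‖ := by
      rw [Subtype.dist_eq, dist_eq_norm]
    have hsq : (0:ℝ) ≤ M * ‖(z : ℂ) - (x : ℂ)‖ ^ 2 := by positivity
    rcases lt_or_ge (dist z x) δ with hlt | hge
    · have hd := hδ' hlt
      rw [dist_eq_norm] at hd
      have h2 : |(f z).re - (f x).re| ≤ ‖f z - f x‖ := by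
        have : (f z - f x).re = (f z).re - (f x).re := Complex.sub_re _ _
        rw [← this]
        exact (Complex.abs_re_le_norm _)
      linarith
    · have h2 : |(f z).re - (f x).re| ≤ 2 * ‖f‖ := by
        have a1 : |(f z).re| ≤ ‖f‖ :=
          le_trans (Complex.abs_re_le_norm _) (f.norm_coe_le_norm z)
        have a2 : |(f x).re| ≤ ‖f‖ :=
          le_trans (Complex.abs_re_le_norm _) (f.norm_coe_le_norm x)
        calc |(f z).re - (f x).re| ≤ |(f z).re| + |(f x).re| := abs_sub _ _
        _ ≤ 2 * ‖f‖ := by linarith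
      have h4 : δ ^ 2 ≤ ‖(z : ℂ) - (x : ℂ)‖ ^ 2 := by
        rw [← hdxz]
        exact pow_le_pow_left₀ hδ.le hge 2
      have h5 : M * δ ^ 2 = 2 * ‖f‖ := by
        rw [hM_def]; field_simp
      nlinarith
  have hb : ∀ n, ‖T n f - f‖ ≤ ε / 4 + (ε / 4 + 2 * M + ‖f‖) * ‖T n 1 - 1‖
      + 2 * M * ‖T n circleIdFun - circleIdFun‖ :=
    fun n => key_est (T n) (hpos n) (hstar n) f hre (ε / 4) M (by positivity) hM hfM
  have hlim : Tendsto (fun n => ε / 4 + (ε / 4 + 2 * M + ‖f‖) * ‖T n 1 - 1‖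
      + 2 * M * ‖T n circleIdFun - circleIdFun‖) atTop
      (nhds (ε / 4 + (ε / 4 + 2 * M + ‖f‖) * 0 + 2 * M * 0)) :=
    (tendsto_const_nhds.add (tendsto_const_nhds.mul h1)).add (tendsto_const_nhds.mul hz)
  have hev : ∀ᶠ n in atTop, ε / 4 + (ε / 4 + 2 * M + ‖f‖) * ‖T n 1 - 1‖
      + 2 * M * ‖T n circleIdFun - circleIdFun‖ < ε :=
    hlim.eventually_lt_const (by ring_nf; linarith)
  filter_upwards [hev] with n hn
  rw [Real.norm_eq_abs, abs_of_nonneg (norm_nonneg _)]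
  exact lt_of_le_of_lt (hb n) hn

end KorovkinAux

theorem korovkin_circle
    (T : ℕ → (C(↥(Metric.sphere (0 : ℂ) 1), ℂ) →ₗ[ℂ] C(↥(Metric.sphere (0 : ℂ) 1), ℂ)))
    (hpos : ∀ n, ∀ f : C(↥(Metric.sphere (0 : ℂ) 1), ℂ),
      (∀ z, (f z).im = 0 ∧ 0 ≤ (f z).re) →
      ∀ z, ((T n f) z).im = 0 ∧ 0 ≤ ((T n f) z).re)
    (h1 : Tendsto (fun n => ‖T n 1 - 1‖) atTop (nhds 0))
    (hz : Tendsto (fun n => ‖T n circleIdFun - circleIdFun‖) atTop (nhds 0)) :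
    ∀ f : C(↥(Metric.sphere (0 : ℂ) 1), ℂ),
      Tendsto (fun n => ‖T n f - f‖) atTop (nhds 0) := by
  intro f
  set u : C(↥(Metric.sphere (0 : ℂ) 1), ℂ) := ⟨fun z => ((f z).re : ℂ),
    Complex.continuous_ofReal.comp (Complex.continuous_re.comp f.continuous)⟩ with hu_def
  set v : C(↥(Metric.sphere (0 : ℂ) 1), ℂ) := ⟨fun z => ((f z).im : ℂ),
    Complex.continuous_ofReal.comp (Complex.continuous_im.comp f.continuous)⟩ with hv_def
  have hu : ∀ z, (u z).im = 0 := fun z => by simp [hu_def]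
  have hv : ∀ z, (v z).im = 0 := fun z => by simp [hv_def]
  have hf : f = u + Complex.I • v := by
    ext z
    simp only [ContinuousMap.add_apply, ContinuousMap.smul_apply, smul_eq_mul,
      hu_def, hv_def, ContinuousMap.coe_mk]
    rw [mul_comm]
    exact (Complex.re_add_im (f z)).symm
  have hTn : ∀ n, T n f - f = (T n u - u) + Complex.I • (T n v - v) := by
    intro n
    rw [hf, map_add, map_smul, smul_sub]
    abel
  have hbound : ∀ n, ‖T n f - f‖ ≤ ‖T n u - u‖ + ‖T n v - v‖ := by
    intro n
    rw [hTn n]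
    refine le_trans (norm_add_le _ _) ?_
    rw [norm_smul, Complex.norm_I, one_mul]
  have hA := KorovkinAux.real_case T hpos h1 hz u hu
  have hB := KorovkinAux.real_case T hpos h1 hz v hv
  have hsum : Tendsto (fun n => ‖T n u - u‖ + ‖T n v - v‖) atTop (nhds 0) := by
    simpa using hA.add hB
  exact squeeze_zero (fun n => norm_nonneg _) hbound hsum
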